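/- arXiv:1902.03863 — 2 statements merged into one kernel-verified Lean document; each statement's English description precedes it below -/
import Mathlib

section
/- Let n ≥ 2 and 0 ≤ k < n be integers, q* = 2n²/((n−k)(2n−1)), and let 1 < p ≤ q with q > q*·p. Let δ ∈ (0,1) with 1/δ ∈ ℕ, and let M̃^k_{ρ,δ} be a linearized k-skeleton maximal operator built from some ρ : {x_1,…,x_u} → [1,2] ∩ δℤ and a face selection (ℓ^i)_{i=1}^u with the following overlap property for some constant C_0 = C_0(n,k): for every coordinate k-plane π, every subset J ⊆ {1,…,u} such that ℓ^i is parallel to π for all i ∈ J, and every affine translate V of π, #{ i ∈ J : ℓ^i ⊆ V } ≤ C_0 |J|^{1 − (n−k)(2n−1)/(2n²)}. Then there exists C' = C'(k,n,p,q) > 0 such that for every f ∈ L^p(ℝ^n): ‖M̃^k_{ρ,δ} f‖_{L^q(Q_0)} ≤ C' · δ^{n/q + (k−n)/p} · ‖f‖_{L^p(ℝ^n)}. -/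
open MeasureTheory Metric Set

noncomputable section

/-- A `k`-face of the axis-parallel cube in `ℝⁿ` with center `x` and side length `2r`:
the coordinates `j ∈ S` (with `#S = n - k`) are fixed at `x j ± r` (sign given by `ε j`),
the remaining coordinates range over `[x j - r, x j + r]`. -/
def kFace {n : ℕ} (x : Fin n → ℝ) (r : ℝ) (S : Finset (Fin n)) (ε : Fin n → Bool) :
    Set (Fin n → ℝ) :=
  {y | (∀ j ∈ S, y j = x j + (if ε j then r else -r)) ∧ ∀ j ∉ S, |y j - x j| ≤ r}

/-- The `k`-skeleton `S_k(x,r)` of the axis-parallel cube with center `x` and side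
length `2r`: the union of all its `k`-faces. -/
def skeleton (n k : ℕ) (x : Fin n → ℝ) (r : ℝ) : Set (Fin n → ℝ) :=
  ⋃ (S : Finset (Fin n)) (_ : S.card = n - k) (ε : Fin n → Bool), kFace x r S ε

/-- The `k`-skeleton maximal operator with width `δ`:
`M^k_δ f (x) = sup_{1 ≤ r ≤ 2} min_j ⨍_{S^j_{k,δ}(x,r)} |f|`, the minimum being taken
over all `k`-faces of the cube with center `x` and side length `2r`, each face thickened
by `δ` in the `ℓ∞` metric (which is the sup metric on `Fin n → ℝ`). -/
def skelMax (n k : ℕ) (δ : ℝ) (f : (Fin n → ℝ) → ℝ) (x : Fin n → ℝ) : ℝ :=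
  ⨆ r ∈ Set.Icc (1 : ℝ) 2,
    ⨅ (S : {S : Finset (Fin n) // S.card = n - k}) (ε : Fin n → Bool),
      ⨍ y in cthickening δ (kFace x r S.1 ε), |f y|

/-- The unit cube `Q₀ = [0,1)ⁿ`. -/
def Q0 (n : ℕ) : Set (Fin n → ℝ) := Set.univ.pi fun _ => Set.Ico (0 : ℝ) 1

/-- The cube `7Q₀`, concentric with `Q₀` and of side length `7`. -/
def sevenQ0 (n : ℕ) : Set (Fin n → ℝ) := Set.univ.pi fun _ => Set.Icc (-3 : ℝ) 4

/-- The translate by `v` of the coordinate `k`-plane spanned by the basis vectors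
`e_j`, `j ∈ π`. -/
def planeTranslate {n : ℕ} (π : Finset (Fin n)) (v : Fin n → ℝ) : Set (Fin n → ℝ) :=
  {y | ∀ j ∉ π, y j = v j}

/-- Center of the grid cube indexed by `z` in the grid of width `η` on `Q₀`. -/
def gridCenter {n : ℕ} (η : ℝ) {m : ℕ} (z : Fin n → Fin m) : Fin n → ℝ :=
  fun j => η * ((z j : ℝ) + 1 / 2)

/-- Index of the grid cube of width `η` containing `x` (for `x ∈ Q₀`). -/
def zOf {n : ℕ} (η : ℝ) {m : ℕ} (hm : 0 < m) (x : Fin n → ℝ) : Fin n → Fin m :=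
  fun j => ⟨(⌊x j / η⌋).toNat % m, Nat.mod_lt _ hm⟩

/-- The selected `k`-face `ℓᶻ` of the skeleton `S_k(x_z, ρ z)`, where `x_z` is the center
of the grid cube indexed by `z`. -/
def linFace {n : ℕ} (η : ℝ) {m : ℕ} (ρ : (Fin n → Fin m) → ℝ)
    (S : (Fin n → Fin m) → Finset (Fin n)) (ε : (Fin n → Fin m) → Fin n → Bool)
    (z : Fin n → Fin m) : Set (Fin n → ℝ) :=
  kFace (gridCenter η z) (ρ z) (S z) (ε z)

/-- The linearized `k`-skeleton maximal operator `M̃^k_{ρ,η}` of width `η`: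
for `x` in the grid cube indexed by `z`, it averages `|f|` over the closed
`η`-neighborhood (in the `ℓ∞` metric) of the selected face `ℓᶻ`. -/
def linMax {n : ℕ} (η : ℝ) {m : ℕ} (hm : 0 < m) (ρ : (Fin n → Fin m) → ℝ)
    (S : (Fin n → Fin m) → Finset (Fin n)) (ε : (Fin n → Fin m) → Fin n → Bool)
    (f : (Fin n → ℝ) → ℝ) (x : Fin n → ℝ) : ℝ :=
  ⨍ y in cthickening η (linFace η ρ S ε (zOf η hm x)), |f y|

/-- The overlap property for the selected faces: every affine translate `V` of a coordinate
`k`-plane `π` contains at most `C₀ · (#J)^{1 - (n-k)(2n-1)/(2n²)}` of the faces `ℓᶻ`, `z ∈ J`,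
whenever all the faces indexed by `J` are parallel to `π`. -/
def OverlapProp {n : ℕ} (k : ℕ) (η : ℝ) {m : ℕ} (ρ : (Fin n → Fin m) → ℝ)
    (S : (Fin n → Fin m) → Finset (Fin n)) (ε : (Fin n → Fin m) → Fin n → Bool)
    (C0 : ℝ) : Prop :=
  ∀ π : Finset (Fin n), π.card = k →
    ∀ J : Set (Fin n → Fin m),
      (∀ z ∈ J, ∃ v : Fin n → ℝ, linFace η ρ S ε z ⊆ planeTranslate π v) →
      ∀ v : Fin n → ℝ,
        ({z ∈ J | linFace η ρ S ε z ⊆ planeTranslate π v}).ncard ≤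
          C0 * (J.ncard : ℝ) ^ (1 - ((n : ℝ) - k) * (2 * (n : ℝ) - 1) / (2 * (n : ℝ) ^ 2))

/-- Abstract maximal averaging operator `T f (x) = sup_{r ∈ I} ⨍_{A_{x,r}} |f|`. -/
def absMax {n : ℕ} {I : Type*} (A : (Fin n → ℝ) → I → Set (Fin n → ℝ))
    (f : (Fin n → ℝ) → ℝ) (x : Fin n → ℝ) : ℝ :=
  ⨆ r : I, ⨍ y in A x r, |f y|

/-- `goodCount A E lam μ` says: for at least `m/2` of the indices `j`, the subset of
`A j ∩ E` where the multiplicity function `Υ = Σᵢ 1_{Aᵢ ∩ E}` is at most `μ` has measure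
at least `(lam/2)·|A j|`. -/
def goodCount {n m : ℕ} (A : Fin m → Set (Fin n → ℝ)) (E : Set (Fin n → ℝ))
    (lam : ℝ) (μ : ℕ) : Prop :=
  (m : ℝ) / 2 ≤
    ({j : Fin m | ENNReal.ofReal (lam / 2) * volume (A j) ≤
        volume {y ∈ A j ∩ E | ({i : Fin m | y ∈ A i ∩ E}).ncard ≤ μ}}).ncard

lemma aux_summable {s : ℝ} (hs : 1 < s) :
    Summable (fun j : ℕ => ((j : ℝ) + 1) ^ (-s)) := by
  have h := (Real.summable_one_div_nat_rpow (p := s)).2 hs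
  have h2 := (summable_nat_add_iff (f := fun n : ℕ => 1 / (n : ℝ) ^ s) 1).2 h
  refine h2.congr fun j => ?_
  rw [Real.rpow_neg (by positivity), one_div]
  push_cast
  ring_nf

lemma aux_energy {ι : Type*} [DecidableEq ι] (r β D K : ℝ) (hr : 0 < r)
    (hD : 0 ≤ D) (hK : ∀ M : ℕ, ∑ j ∈ Finset.range M, ((j : ℝ) + 1) ^ (-(r * β)) ≤ K)
    (g : ι → ℝ) (hg : ∀ z, 0 ≤ g z)
    (H : ∀ B : Finset ι, ∑ z ∈ B, g z ≤ D * (B.card : ℝ) ^ (1 - β)) :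
    ∀ A : Finset ι, ∑ z ∈ A, g z ^ r ≤ D ^ r * K := by
  have key : ∀ (N : ℕ) (A : Finset ι), A.card = N →
      ∑ z ∈ A, g z ^ r ≤ D ^ r * ∑ j ∈ Finset.range N, ((j : ℝ) + 1) ^ (-(r * β)) := by
    intro N
    induction N with
    | zero =>
      intro A hA
      rw [Finset.card_eq_zero.1 hA]
      simp
    | succ N ih =>
      intro A hA
      have hne : A.Nonempty := Finset.card_pos.1 (by omega)
      obtain ⟨z₀, hz₀A, hz₀⟩ := A.exists_min_image g hne
      have hcard' : (A.erase z₀).card = N := by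
        rw [Finset.card_erase_of_mem hz₀A, hA]; omega
      have hApos : (0 : ℝ) < (A.card : ℝ) := by
        rw [hA]; positivity
      have h1 : (A.card : ℝ) * g z₀ ≤ D * (A.card : ℝ) ^ (1 - β) := by
        have h0 := Finset.card_nsmul_le_sum A g (g z₀) (fun x hx => hz₀ x hx)
        rw [nsmul_eq_mul] at h0
        exact h0.trans (H A)
      have h2 : g z₀ ≤ D * (A.card : ℝ) ^ (-β) := by
        have hexp : (A.card : ℝ) ^ (1 - β) = (A.card : ℝ) * (A.card : ℝ) ^ (-β) := by
          rw [show (1 : ℝ) - β = 1 + (-β) by ring, Real.rpow_add hApos, Real.rpow_one]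
        rw [hexp, ← mul_assoc, mul_comm D ((A.card:ℝ)), mul_assoc] at h1
        exact le_of_mul_le_mul_left h1 hApos
      have h3 : g z₀ ^ r ≤ D ^ r * ((N : ℝ) + 1) ^ (-(r * β)) := by
        have := Real.rpow_le_rpow (hg z₀) h2 hr.le
        calc g z₀ ^ r ≤ (D * (A.card : ℝ) ^ (-β)) ^ r := this
          _ = D ^ r * (((A.card : ℝ)) ^ (-β)) ^ r := by
              rw [Real.mul_rpow hD (Real.rpow_nonneg hApos.le _)]
          _ = D ^ r * ((A.card : ℝ)) ^ (-(r * β)) := by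
              rw [← Real.rpow_mul hApos.le]; ring_nf
          _ = D ^ r * ((N : ℝ) + 1) ^ (-(r * β)) := by
              rw [hA]; push_cast; ring_nf
      calc ∑ z ∈ A, g z ^ r = g z₀ ^ r + ∑ z ∈ A.erase z₀, g z ^ r :=
            (Finset.add_sum_erase A _ hz₀A).symm
        _ ≤ D ^ r * ((N : ℝ) + 1) ^ (-(r * β)) +
            D ^ r * ∑ j ∈ Finset.range N, ((j : ℝ) + 1) ^ (-(r * β)) := by
            exact add_le_add h3 (ih _ hcard')
        _ = D ^ r * ∑ j ∈ Finset.range (N + 1), ((j : ℝ) + 1) ^ (-(r * β)) := by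
            rw [Finset.sum_range_succ]; ring
  intro A
  refine (key A.card A rfl).trans ?_
  exact mul_le_mul_of_nonneg_left (hK A.card) (Real.rpow_nonneg hD r)



lemma pinch {n : ℕ} {δ r : ℝ} (hδ : 0 ≤ δ) {x : Fin n → ℝ} {Sz : Finset (Fin n)}
    {εz : Fin n → Bool} {y : Fin n → ℝ}
    (hy : y ∈ cthickening δ (kFace x r Sz εz)) {j : Fin n} (hj : j ∈ Sz) :
    |y j - (x j + (if εz j then r else -r))| ≤ δ := by
  rw [Metric.mem_cthickening_iff] at hy
  have h1 : edist (y j) (x j + (if εz j then r else -r)) ≤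
      EMetric.infEdist y (kFace x r Sz εz) := by
    show _ ≤ Metric.infEDist _ _
    rw [EMetric.le_infEdist]
    intro w hw
    have := hw.1 j hj
    calc edist (y j) (x j + (if εz j then r else -r)) = edist (y j) (w j) := by rw [this]
      _ ≤ edist y w := edist_le_pi_edist y w j
  have h2 := h1.trans hy
  rw [edist_dist, Real.dist_eq] at h2
  exact (ENNReal.ofReal_le_ofReal_iff hδ).1 h2

lemma far_coord {n : ℕ} {δ r : ℝ} (hδ : 0 ≤ δ) {x : Fin n → ℝ} {Sz : Finset (Fin n)}
    {εz : Fin n → Bool} {y : Fin n → ℝ}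
    (hy : y ∈ cthickening δ (kFace x r Sz εz)) {j : Fin n} (hj : j ∉ Sz) :
    |y j - x j| ≤ r + δ := by
  rcases le_or_gt (|y j - x j|) r with h | h
  · linarith
  rw [Metric.mem_cthickening_iff] at hy
  have h1 : ENNReal.ofReal (|y j - x j| - r) ≤ EMetric.infEdist y (kFace x r Sz εz) := by
    show _ ≤ Metric.infEDist _ _
    rw [EMetric.le_infEdist]
    intro w hw
    have hw2 := hw.2 j hj
    have hd : |y j - x j| - r ≤ dist (y j) (w j) := by
      rw [Real.dist_eq]
      have := abs_sub_le (y j) (w j) (x j)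
      have h2 : |w j - x j| ≤ r := hw2
      linarith
    calc ENNReal.ofReal (|y j - x j| - r) ≤ ENNReal.ofReal (dist (y j) (w j)) :=
          ENNReal.ofReal_le_ofReal hd
      _ = edist (y j) (w j) := (edist_dist _ _).symm
      _ ≤ edist y w := edist_le_pi_edist y w j
  have h2 := h1.trans hy
  rw [ENNReal.ofReal_le_ofReal_iff hδ] at h2
  linarith

lemma box_subset {n : ℕ} {δ r : ℝ} (hδ : 0 ≤ δ) {x : Fin n → ℝ}
    (Sz : Finset (Fin n)) (εz : Fin n → Bool) :
    (Set.univ.pi fun j => if j ∈ Sz then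
        Icc (x j + (if εz j then r else -r) - δ) (x j + (if εz j then r else -r) + δ)
      else Icc (x j - r) (x j + r))
      ⊆ cthickening δ (kFace x r Sz εz) := by
  intro y hy
  set w : Fin n → ℝ := fun j => if j ∈ Sz then x j + (if εz j then r else -r) else y j with hw
  have hwmem : w ∈ kFace x r Sz εz := by
    constructor
    · intro j hj
      simp only [hw, if_pos hj]
    · intro j hj
      have := hy j (Set.mem_univ j)
      simp only [if_neg hj] at this
      simp only [hw, if_neg hj]
      rw [abs_le]
      exact ⟨by linarith [this.1], by linarith [this.2]⟩
  have hdist : dist y w ≤ δ := by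
    rw [dist_pi_le_iff hδ]
    intro j
    by_cases hj : j ∈ Sz
    · have := hy j (Set.mem_univ j)
      simp only [if_pos hj] at this
      simp only [hw, if_pos hj]
      rw [Real.dist_eq, abs_le]
      exact ⟨by linarith [this.1], by linarith [this.2]⟩
    · simp only [hw, if_neg hj]
      simpa using hδ
  rw [Metric.mem_cthickening_iff]
  calc EMetric.infEdist y (kFace x r Sz εz) ≤ edist y w := EMetric.infEdist_le_edist_of_mem hwmem
    _ = ENNReal.ofReal (dist y w) := edist_dist _ _
    _ ≤ ENNReal.ofReal δ := ENNReal.ofReal_le_ofReal hdist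

lemma volume_lower {n k : ℕ} (hkn : k ≤ n) {δ r : ℝ} (hδ : 0 ≤ δ) (hr : 1 ≤ r)
    {x : Fin n → ℝ} {Sz : Finset (Fin n)} (hc : Sz.card = n - k) (εz : Fin n → Bool) :
    ENNReal.ofReal ((2 * δ) ^ (n - k) * 2 ^ k) ≤
      volume (cthickening δ (kFace x r Sz εz)) := by
  have hsub := box_subset (x := x) (r := r) hδ Sz εz
  refine le_trans ?_ (measure_mono hsub)
  rw [volume_pi_pi]
  have hvol : ∀ j : Fin n, volume ((fun j => if j ∈ Sz then
        Icc (x j + (if εz j then r else -r) - δ) (x j + (if εz j then r else -r) + δ)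
      else Icc (x j - r) (x j + r)) j) =
      if j ∈ Sz then ENNReal.ofReal (2 * δ) else ENNReal.ofReal (2 * r) := by
    intro j
    by_cases hj : j ∈ Sz
    · simp only [if_pos hj, Real.volume_Icc]
      ring_nf
    · simp only [if_neg hj, Real.volume_Icc]
      ring_nf
  rw [Finset.prod_congr rfl fun j _ => hvol j]
  rw [← Finset.prod_mul_prod_compl Sz, Finset.prod_congr rfl fun j hj => if_pos hj,
    Finset.prod_congr rfl fun j hj => if_neg (Finset.mem_compl.1 hj),
    Finset.prod_const, Finset.prod_const, Finset.card_compl]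
  simp only [Fintype.card_fin, hc]
  have hcompl : n - (n - k) = k := by omega
  rw [hcompl]
  calc ENNReal.ofReal ((2 * δ) ^ (n - k) * 2 ^ k)
      = ENNReal.ofReal (2 * δ) ^ (n - k) * ENNReal.ofReal 2 ^ k := by
        rw [ENNReal.ofReal_mul (by positivity), ENNReal.ofReal_pow (by positivity),
          ENNReal.ofReal_pow (by norm_num)]
    _ ≤ ENNReal.ofReal (2 * δ) ^ (n - k) * ENNReal.ofReal (2 * r) ^ k := by
        gcongr
        linarith

lemma volume_upper_ne_top {n : ℕ} {δ r : ℝ} (hr : 0 ≤ r)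
    {x : Fin n → ℝ} {Sz : Finset (Fin n)} {εz : Fin n → Bool} :
    volume (cthickening δ (kFace x r Sz εz)) ≠ ⊤ := by
  have hb : Bornology.IsBounded (kFace x r Sz εz) := by
    refine (Metric.isBounded_closedBall (x := x) (r := r)).subset ?_
    intro w hw
    rw [Metric.mem_closedBall, dist_pi_le_iff hr]
    intro j
    rw [Real.dist_eq]
    by_cases hj : j ∈ Sz
    · rw [hw.1 j hj]
      rcases (εz j).eq_false_or_eq_true with h | h <;>
        · simp only [h, if_true, if_false, Bool.false_eq_true]
          rw [abs_le]
          constructor <;> linarith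
    · exact hw.2 j hj
  exact (hb.cthickening.measure_lt_top).ne


lemma avg_pow_le {α : Type*} [MeasureSpace α] {A : Set α} (hA : MeasurableSet A)
    (hA0 : volume A ≠ 0) (hAt : volume A ≠ ⊤) {f : α → ℝ}
    (hfm : AEStronglyMeasurable f volume) {p : ℝ} (hp : 1 < p) :
    ENNReal.ofReal (⨍ y in A, |f y|) ^ p ≤
      (volume A)⁻¹ * ∫⁻ y in A, (‖f y‖₊ : ENNReal) ^ p := by
  have hVpos : 0 < (volume A).toReal := ENNReal.toReal_pos hA0 hAt
  -- step 1: ofReal of the average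
  have h1 : ENNReal.ofReal (⨍ y in A, |f y|) ≤
      (volume A)⁻¹ * ∫⁻ y in A, (‖f y‖₊ : ENNReal) := by
    rw [setAverage_eq, smul_eq_mul, ENNReal.ofReal_mul (by positivity)]
    have habs : AEStronglyMeasurable (fun y => |f y|) (volume.restrict A) :=
      (hfm.restrict (s := A)).norm.congr (Filter.Eventually.of_forall fun y => (Real.norm_eq_abs (f y)))
    have hnn : 0 ≤ᵐ[volume.restrict A] fun y => |f y| :=
      Filter.Eventually.of_forall fun y => abs_nonneg _
    rw [integral_eq_lintegral_of_nonneg_ae hnn habs]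
    have h2 : ENNReal.ofReal ((volume.real A)⁻¹) = (volume A)⁻¹ := by
      show ENNReal.ofReal ((volume A).toReal⁻¹) = _
      rw [ENNReal.ofReal_inv_of_pos hVpos, ENNReal.ofReal_toReal hAt]
    rw [h2]
    gcongr
    have : ∀ y, ENNReal.ofReal (|f y|) = (‖f y‖₊ : ENNReal) := fun y =>
      (Real.enorm_eq_ofReal_abs (f y)).symm
    rw [lintegral_congr fun y => (this y).symm]
    exact ENNReal.ofReal_toReal_le
  -- step 2: Hölder
  set p' : ℝ := p.conjExponent with hp'
  have hconj : p.HolderConjugate p' := Real.HolderConjugate.conjExponent hp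
  have hFm : AEMeasurable (fun y => (‖f y‖₊ : ENNReal)) (volume.restrict A) :=
    (hfm.restrict (s := A)).enorm
  have hold := ENNReal.lintegral_mul_le_Lp_mul_Lq (volume.restrict A) hconj hFm
    (aemeasurable_const (b := (1 : ENNReal)))
  simp only [Pi.mul_apply, mul_one, ENNReal.one_rpow, lintegral_const,
    Measure.restrict_apply MeasurableSet.univ, Set.univ_inter, one_mul] at hold
  -- hold : ∫⁻ in A, F ≤ (∫⁻ in A, F ^ p) ^ (1/p) * (volume A) ^ (1/p')
  have h3 : ENNReal.ofReal (⨍ y in A, |f y|) ≤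
      (∫⁻ y in A, (‖f y‖₊ : ENNReal) ^ p)^(1/p) * (volume A) ^ (-(1/p)) := by
    refine h1.trans ?_
    calc (volume A)⁻¹ * ∫⁻ y in A, (‖f y‖₊ : ENNReal)
        ≤ (volume A)⁻¹ * ((∫⁻ y in A, (‖f y‖₊ : ENNReal) ^ p) ^ (1/p) * (volume A) ^ (1/p')) := by
          gcongr
      _ = (∫⁻ y in A, (‖f y‖₊ : ENNReal) ^ p) ^ (1/p) *
            ((volume A)⁻¹ * (volume A) ^ (1/p')) := by ring
      _ = (∫⁻ y in A, (‖f y‖₊ : ENNReal) ^ p) ^ (1/p) * (volume A) ^ (-(1/p)) := by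
          congr 1
          rw [← ENNReal.rpow_neg_one (volume A) , ← ENNReal.rpow_add _ _ hA0 hAt]
          congr 1
          have h4 := hconj.inv_add_inv_eq_one
          rw [one_div, one_div]
          linarith
  -- step 3: raise to power p
  have hppos : (0:ℝ) < p := by linarith
  calc ENNReal.ofReal (⨍ y in A, |f y|) ^ p
      ≤ ((∫⁻ y in A, (‖f y‖₊ : ENNReal) ^ p)^(1/p) * (volume A) ^ (-(1/p))) ^ p :=
        ENNReal.rpow_le_rpow h3 hppos.le
    _ = (volume A)⁻¹ * ∫⁻ y in A, (‖f y‖₊ : ENNReal) ^ p := by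
        rw [ENNReal.mul_rpow_of_nonneg _ _ hppos.le, ← ENNReal.rpow_mul, ← ENNReal.rpow_mul]
        rw [one_div, inv_mul_cancel₀ hppos.ne']
        rw [show -p⁻¹ * p = -1 by field_simp]
        rw [ENNReal.rpow_one, ENNReal.rpow_neg_one]
        ring


def gridCube {n : ℕ} (δ : ℝ) {m : ℕ} (z : Fin n → Fin m) : Set (Fin n → ℝ) :=
  Set.univ.pi fun j => Set.Ico (δ * (z j : ℝ)) (δ * ((z j : ℝ) + 1))

lemma gridCube_meas {n : ℕ} (δ : ℝ) {m : ℕ} (z : Fin n → Fin m) :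
    MeasurableSet (gridCube δ z) :=
  MeasurableSet.univ_pi fun j => measurableSet_Ico

lemma gridCube_vol {n : ℕ} {δ : ℝ} (hδ : 0 < δ) {m : ℕ} (z : Fin n → Fin m) :
    volume (gridCube δ z) = ENNReal.ofReal (δ ^ n) := by
  rw [gridCube, volume_pi_pi]
  have : ∀ j : Fin n, volume (Set.Ico (δ * (z j : ℝ)) (δ * ((z j : ℝ) + 1))) =
      ENNReal.ofReal δ := by
    intro j
    rw [Real.volume_Ico]
    ring_nf
  rw [Finset.prod_congr rfl fun j _ => this j, Finset.prod_const, Finset.card_univ,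
    Fintype.card_fin, ENNReal.ofReal_pow hδ.le]

lemma gridCube_disj {n : ℕ} {δ : ℝ} (hδ : 0 < δ) {m : ℕ} :
    Pairwise (Function.onFun Disjoint (gridCube δ (n := n) (m := m))) := by
  intro z z' hzz'
  rw [Function.onFun, Set.disjoint_left]
  intro x hx hx'
  apply hzz'
  funext j
  have h1 := hx j (Set.mem_univ j)
  have h2 := hx' j (Set.mem_univ j)
  simp only [Set.mem_Ico] at h1 h2
  have hz : ((z j : ℝ)) < (z' j : ℝ) + 1 := by
    have := lt_of_le_of_lt h1.1 h2.2
    exact lt_of_mul_lt_mul_left this hδ.le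
  have hz' : ((z' j : ℝ)) < (z j : ℝ) + 1 := by
    have := lt_of_le_of_lt h2.1 h1.2
    exact lt_of_mul_lt_mul_left this hδ.le
  have hA' : (z j : ℕ) < (z' j : ℕ) + 1 := by exact_mod_cast hz
  have hB' : (z' j : ℕ) < (z j : ℕ) + 1 := by exact_mod_cast hz'
  exact Fin.ext (by omega)

lemma zOf_eq {n : ℕ} {δ : ℝ} (hδ : 0 < δ) {m : ℕ} (hm : 0 < m) {z : Fin n → Fin m}
    {x : Fin n → ℝ} (hx : x ∈ gridCube δ z) : zOf δ hm x = z := by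
  funext j
  have h1 := hx j (Set.mem_univ j)
  simp only [Set.mem_Ico] at h1
  have hfloor : ⌊x j / δ⌋ = (z j : ℕ) := by
    rw [Int.floor_eq_iff]
    constructor
    · push_cast
      rw [le_div_iff₀ hδ]
      calc ((z j : ℕ) : ℝ) * δ = δ * (z j : ℝ) := by ring
        _ ≤ x j := h1.1
    · push_cast
      rw [div_lt_iff₀ hδ]
      calc x j < δ * ((z j : ℝ) + 1) := h1.2
        _ = (((z j : ℕ) : ℝ) + 1) * δ := by ring
  apply Fin.ext
  show (⌊x j / δ⌋).toNat % m = (z j : ℕ)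
  rw [hfloor]
  simp only [Int.toNat_natCast]
  exact Nat.mod_eq_of_lt (z j).2

lemma Q0_eq_iUnion {n : ℕ} {δ : ℝ} (hδ : 0 < δ) {m : ℕ} (hm : 0 < m) (hδm : δ * m = 1) :
    Q0 n = ⋃ z : Fin n → Fin m, gridCube δ z := by
  apply Set.Subset.antisymm
  · intro x hx
    have hxj : ∀ j, 0 ≤ x j ∧ x j < 1 := by
      intro j
      have := hx j (Set.mem_univ j)
      simpa using this
    refine Set.mem_iUnion.2 ⟨zOf δ hm x, fun j _ => ?_⟩
    have h0 : 0 ≤ x j / δ := div_nonneg (hxj j).1 hδ.le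
    have hmR : x j / δ < (m : ℝ) := by
      rw [div_lt_iff₀ hδ]
      calc x j < 1 := (hxj j).2
        _ = (m : ℝ) * δ := by rw [mul_comm]; exact hδm.symm
    have hfl0 : 0 ≤ ⌊x j / δ⌋ := Int.floor_nonneg.2 h0
    have hflm : ⌊x j / δ⌋ < (m : ℤ) := by
      have : (⌊x j / δ⌋ : ℝ) ≤ x j / δ := Int.floor_le _
      have h2 : (⌊x j / δ⌋ : ℝ) < (m : ℝ) := lt_of_le_of_lt this hmR
      exact_mod_cast h2
    have hval : ((zOf δ hm x j : ℕ) : ℤ) = ⌊x j / δ⌋ := by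
      show (((⌊x j / δ⌋).toNat % m : ℕ) : ℤ) = ⌊x j / δ⌋
      have htn : (⌊x j / δ⌋).toNat < m := by omega
      rw [Nat.mod_eq_of_lt htn]
      omega
    have hvalR : ((zOf δ hm x j : ℕ) : ℝ) = ((⌊x j / δ⌋ : ℤ) : ℝ) := by
      exact_mod_cast congrArg (Int.cast : ℤ → ℝ) hval
    simp only [Set.mem_Ico]
    constructor
    · rw [hvalR]
      calc δ * ((⌊x j / δ⌋ : ℤ) : ℝ) ≤ δ * (x j / δ) :=
            mul_le_mul_of_nonneg_left (Int.floor_le _) hδ.le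
        _ = x j := by field_simp
    · rw [hvalR]
      have := Int.lt_floor_add_one (x j / δ)
      calc x j = δ * (x j / δ) := by field_simp
        _ < δ * (((⌊x j / δ⌋ : ℤ) : ℝ) + 1) := by
            apply mul_lt_mul_of_pos_left _ hδ
            exact this
  · refine Set.iUnion_subset fun z x hx j _ => ?_
    have h1 := hx j (Set.mem_univ j)
    simp only [Set.mem_Ico] at h1 ⊢
    constructor
    · have : (0 : ℝ) ≤ δ * (z j : ℝ) := by positivity
      linarith [h1.1]
    · have hzj : ((z j : ℝ) + 1) ≤ (m : ℝ) := by
        have : (z j : ℕ) + 1 ≤ m := (z j).2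
        exact_mod_cast this
      calc x j < δ * ((z j : ℝ) + 1) := h1.2
        _ ≤ δ * (m : ℝ) := mul_le_mul_of_nonneg_left hzj hδ.le
        _ = 1 := hδm


lemma aux_const_calc {n k : ℕ} (hk : k < n) {δ p q C K Cm T Nr : ℝ}
    (hδ0 : 0 < δ) (hp0 : 0 < p) (hq0 : 0 < q) (hK : 0 ≤ K) (hCm : 0 ≤ Cm)
    (hNr : 0 ≤ Nr) (hT0 : 0 ≤ T) (hT : T ^ (q / p) = Nr ^ q) (hC0 : 0 ≤ C)
    (hC : K * (Cm * ((2 : ℝ) ^ n)⁻¹) ^ (q / p) ≤ C ^ q) :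
    ((((2 * δ) ^ (n - k) * 2 ^ k)⁻¹ * (Cm * T)) ^ (q / p) * K) * δ ^ n ≤
      (C * δ ^ ((n : ℝ) / q + ((k : ℝ) - n) / p) * Nr) ^ q := by
  have hδn : (0:ℝ) < δ ^ (n - k) := by positivity
  have hw : ((2 * δ) ^ (n - k) * 2 ^ k : ℝ) = 2 ^ n * δ ^ (n - k) := by
    rw [mul_pow, mul_comm ((2:ℝ)^(n-k)) (δ^(n-k)), mul_assoc, ← pow_add]
    have : n - k + k = n := by omega
    rw [this]
    ring
  have hbase : (((2 * δ) ^ (n - k) * 2 ^ k : ℝ))⁻¹ * (Cm * T) =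
      (Cm * ((2:ℝ) ^ n)⁻¹) * (T * ((δ ^ (n - k) : ℝ))⁻¹) := by
    rw [hw, mul_inv]
    ring
  have hsplit : ((((2 * δ) ^ (n - k) * 2 ^ k : ℝ))⁻¹ * (Cm * T)) ^ (q / p) =
      (Cm * ((2:ℝ) ^ n)⁻¹) ^ (q / p) * (Nr ^ q * (((δ ^ (n - k) : ℝ))⁻¹) ^ (q / p)) := by
    rw [hbase, Real.mul_rpow (by positivity) (by positivity),
      Real.mul_rpow hT0 (by positivity), hT]
  have hdelta : (((δ ^ (n - k) : ℝ))⁻¹) ^ (q / p) = δ ^ (-(((n:ℝ) - k) * (q / p))) := by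
    rw [← Real.rpow_natCast δ (n - k), ← Real.rpow_neg hδ0.le,
      ← Real.rpow_mul hδ0.le]
    congr 1
    have : ((n - k : ℕ) : ℝ) = (n : ℝ) - k := by
      have hkn : k ≤ n := hk.le
      push_cast [Nat.cast_sub hkn]
      ring
    rw [this]
    ring
  have hdn : (δ : ℝ) ^ n = δ ^ ((n : ℕ) : ℝ) := (Real.rpow_natCast δ n).symm
  have hcollect : δ ^ (-(((n:ℝ) - k) * (q / p))) * δ ^ n =
      δ ^ (((n : ℝ) / q + ((k : ℝ) - n) / p) * q) := by
    rw [hdn, ← Real.rpow_add hδ0]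
    congr 1
    field_simp
    ring
  calc ((((2 * δ) ^ (n - k) * 2 ^ k)⁻¹ * (Cm * T)) ^ (q / p) * K) * δ ^ n
      = (K * (Cm * ((2:ℝ) ^ n)⁻¹) ^ (q / p)) *
          (δ ^ (-(((n:ℝ) - k) * (q / p))) * δ ^ n) * Nr ^ q := by
        rw [hsplit, hdelta]
        ring
    _ = (K * (Cm * ((2:ℝ) ^ n)⁻¹) ^ (q / p)) *
          δ ^ (((n : ℝ) / q + ((k : ℝ) - n) / p) * q) * Nr ^ q := by rw [hcollect]
    _ ≤ C ^ q * δ ^ (((n : ℝ) / q + ((k : ℝ) - n) / p) * q) * Nr ^ q := by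
        have h1 : (0:ℝ) ≤ δ ^ (((n : ℝ) / q + ((k : ℝ) - n) / p) * q) :=
          Real.rpow_nonneg hδ0.le _
        have h2 : (0:ℝ) ≤ Nr ^ q := Real.rpow_nonneg hNr _
        exact mul_le_mul_of_nonneg_right (mul_le_mul_of_nonneg_right hC h1) h2
    _ = (C * δ ^ ((n : ℝ) / q + ((k : ℝ) - n) / p) * Nr) ^ q := by
        rw [Real.mul_rpow (by positivity) hNr,
          Real.mul_rpow hC0 (Real.rpow_nonneg hδ0.le _), ← Real.rpow_mul hδ0.le]



open scoped Classical in
lemma multiplicity_bound {n k : ℕ} (hk : k < n) {δ : ℝ} (hδ : 0 < δ) {m : ℕ}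
    {ρ : (Fin n → Fin m) → ℝ} (hρ : ∀ z, ρ z ∈ Set.Icc (1:ℝ) 2 ∧ ∃ t : ℤ, ρ z = δ * t)
    {S : (Fin n → Fin m) → Finset (Fin n)} (hS : ∀ z, (S z).card = n - k)
    {ε : (Fin n → Fin m) → Fin n → Bool} {C0 : ℝ} (hC0 : 0 < C0)
    (hov : OverlapProp k δ ρ S ε C0)
    (B : Finset (Fin n → Fin m)) (y : Fin n → ℝ) :
    ((B.filter fun z => y ∈ cthickening δ (linFace δ ρ S ε z)).card : ℝ) ≤
      (12 : ℝ) ^ n * C0 *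
        (B.card : ℝ) ^ (1 - ((n : ℝ) - k) * (2 * (n : ℝ) - 1) / (2 * (n : ℝ) ^ 2)) := by
  set β : ℝ := ((n : ℝ) - k) * (2 * (n : ℝ) - 1) / (2 * (n : ℝ) ^ 2) with hβ
  have hn1 : (1 : ℝ) ≤ (n : ℝ) := by
    have : 1 ≤ n := by omega
    exact_mod_cast this
  have hkn : (k : ℝ) < (n : ℝ) := by exact_mod_cast hk
  have hβ1 : 0 ≤ 1 - β := by
    rw [hβ, sub_nonneg, div_le_one (by positivity)]
    nlinarith
  set T := B.filter fun z => y ∈ cthickening δ (linFace δ ρ S ε z) with hT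
  choose t ht using fun z => (hρ z).2
  set M : (Fin n → Fin m) → Fin n → ℤ :=
    fun z j => (z j : ℤ) + (if ε z j then t z else -(t z)) with hM
  have hc : ∀ z j, gridCenter δ z j + (if ε z j then ρ z else -(ρ z)) =
      δ * ((M z j : ℝ) + 1 / 2) := by
    intro z j
    rcases (ε z j).eq_false_or_eq_true with h | h <;>
      simp only [gridCenter, hM, h, if_true, if_false, Bool.false_eq_true, ht z] <;>
      push_cast <;> ring
  set M₀ : Fin n → ℤ := fun j => ⌈y j / δ - 3 / 2⌉ with hM₀
  have window : ∀ z ∈ T, ∀ j ∈ S z, M₀ j ≤ M z j ∧ M z j ≤ M₀ j + 2 := by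
    intro z hz j hj
    have hyz : y ∈ cthickening δ (linFace δ ρ S ε z) := (Finset.mem_filter.1 hz).2
    have hpin := pinch hδ.le (x := gridCenter δ z) (r := ρ z) (Sz := S z) (εz := ε z) hyz hj
    have hpin2 : |y j - δ * ((M z j : ℝ) + 1 / 2)| ≤ δ := by
      have := hc z j
      rcases (ε z j).eq_false_or_eq_true with h | h <;>
        simp only [h, if_true, if_false, Bool.false_eq_true] at hpin this <;>
        rw [← this] <;> exact hpin
    rw [abs_le] at hpin2
    have hlo : y j / δ - 3 / 2 ≤ (M z j : ℝ) := by
      rw [sub_le_iff_le_add, div_le_iff₀ hδ]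
      nlinarith [hpin2.1, hpin2.2]
    have hhi : (M z j : ℝ) ≤ y j / δ + 1 / 2 := by
      have h5 : ((M z j : ℝ) - 1 / 2) * δ ≤ y j := by nlinarith [hpin2.1, hpin2.2]
      have h6 : (M z j : ℝ) - 1 / 2 ≤ y j / δ := (le_div_iff₀ hδ).2 h5
      linarith
    constructor
    · exact Int.ceil_le.2 hlo
    · have h1 : (y j / δ - 3 / 2 : ℝ) ≤ (M₀ j : ℝ) + 0 := by
        simpa using Int.le_ceil (y j / δ - 3 / 2)
      have : (M z j : ℝ) ≤ (M₀ j : ℝ) + 2 := by linarith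
      exact_mod_cast this
  set key : (Fin n → Fin m) → Finset (Fin n) × (Fin n → Bool) × (Fin n → Fin 3) :=
    fun z => (S z, ε z, fun j => if j ∈ S z then
      (⟨(M z j - M₀ j).toNat % 3, Nat.mod_lt _ (by norm_num)⟩ : Fin 3) else 0) with hkey
  have hcount := Finset.card_eq_sum_card_fiberwise
    (f := key) (s := T) (t := Finset.univ) (fun x _ => Finset.mem_univ _)
  have hfiber : ∀ w, (((T.filter fun z => key z = w)).card : ℝ) ≤
      C0 * (B.card : ℝ) ^ (1 - β) := by
    intro w
    rcases Finset.eq_empty_or_nonempty (T.filter fun z => key z = w) with hemp | ⟨z₀, hz₀⟩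
    · rw [hemp]
      simp only [Finset.card_empty, Nat.cast_zero]
      positivity
    have hz₀T : z₀ ∈ T := (Finset.mem_filter.1 hz₀).1
    have hz₀k : key z₀ = w := (Finset.mem_filter.1 hz₀).2
    set σ : Finset (Fin n) := w.1 with hσ
    have hσc : σ.card = n - k := by rw [hσ, ← hz₀k]; exact hS z₀
    have hπ : σᶜ.card = k := by
      rw [Finset.card_compl, Fintype.card_fin, hσc]; omega
    set J : Set (Fin n → Fin m) := {z | z ∈ B ∧ S z = σ} with hJ
    have hpar : ∀ z ∈ J, ∃ v : Fin n → ℝ, linFace δ ρ S ε z ⊆ planeTranslate σᶜ v := by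
      intro z hz
      refine ⟨fun j => δ * ((M z j : ℝ) + 1 / 2), fun u hu j hj => ?_⟩
      have hjσ : j ∈ S z := by
        rw [hz.2]
        by_contra hjs
        exact hj (Finset.mem_compl.2 hjs)
      rw [hu.1 j hjσ, hc z j]
    set v : Fin n → ℝ := fun j => δ * (((M₀ j : ℝ) + ((w.2.2 j : ℕ) : ℝ)) + 1 / 2) with hv
    have hsub : ((T.filter fun z => key z = w) : Set (Fin n → Fin m)) ⊆
        {z ∈ J | linFace δ ρ S ε z ⊆ planeTranslate σᶜ v} := by
      intro z hz
      rw [Finset.mem_coe, Finset.mem_filter] at hz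
      obtain ⟨hzT, hzk⟩ := hz
      have hzB : z ∈ B := (Finset.mem_filter.1 hzT).1
      have hSz : S z = σ := by rw [hσ, ← hzk]
      refine ⟨⟨hzB, hSz⟩, fun u hu j hj => ?_⟩
      have hjσ : j ∈ S z := by
        rw [hSz]
        by_contra hjs
        exact hj (Finset.mem_compl.2 hjs)
      rw [hu.1 j hjσ, hc z j, hv]
      have hwin := window z hzT j hjσ
      have h3 : (w.2.2 j : ℕ) = (M z j - M₀ j).toNat := by
        rw [← hzk]
        simp only [hkey, if_pos hjσ]
        exact Nat.mod_eq_of_lt (by omega)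
      have h4 : (M z j : ℝ) = (M₀ j : ℝ) + ((w.2.2 j : ℕ) : ℝ) := by
        have h6 : ((M z j - M₀ j).toNat : ℤ) = M z j - M₀ j := Int.toNat_of_nonneg (by omega)
        have h7 : (((M z j - M₀ j).toNat : ℕ) : ℝ) = (M z j : ℝ) - (M₀ j : ℝ) := by
          exact_mod_cast congrArg (Int.cast : ℤ → ℝ) h6
        rw [h3, h7]
        ring
      rw [h4]
    have hovb := hov σᶜ hπ J hpar v
    have hfin : ({z ∈ J | linFace δ ρ S ε z ⊆ planeTranslate σᶜ v}).Finite := Set.toFinite _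
    calc (((T.filter fun z => key z = w)).card : ℝ)
        = (((T.filter fun z => key z = w) : Set (Fin n → Fin m))).ncard := by
          rw [Set.ncard_coe_finset]
      _ ≤ (({z ∈ J | linFace δ ρ S ε z ⊆ planeTranslate σᶜ v}).ncard : ℝ) := by
          exact_mod_cast Nat.cast_le.2 (Set.ncard_le_ncard hsub hfin)
      _ ≤ C0 * (J.ncard : ℝ) ^ (1 - β) := hovb
      _ ≤ C0 * (B.card : ℝ) ^ (1 - β) := by
          have hJB : J.ncard ≤ B.card := by
            rw [← Set.ncard_coe_finset B]
            exact Set.ncard_le_ncard (fun z hz => hz.1) (Set.toFinite _)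
          exact mul_le_mul_of_nonneg_left
            (Real.rpow_le_rpow (Nat.cast_nonneg _) (Nat.cast_le.2 hJB) hβ1)
            hC0.le
  have hcard12 : (Fintype.card (Finset (Fin n) × (Fin n → Bool) × (Fin n → Fin 3)) : ℝ) ≤
      (12 : ℝ) ^ n := by
    rw [Fintype.card_prod, Fintype.card_prod, Fintype.card_finset, Fintype.card_fun,
      Fintype.card_fun]
    simp only [Fintype.card_fin, Fintype.card_bool]
    push_cast
    rw [show (12 : ℝ) = 2 * (2 * 3) by norm_num, mul_pow, mul_pow]
  calc ((T.card : ℝ))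
      = ∑ w : Finset (Fin n) × (Fin n → Bool) × (Fin n → Fin 3),
          (((T.filter fun z => key z = w)).card : ℝ) := by
        rw [hcount]; push_cast; rfl
    _ ≤ ∑ _w : Finset (Fin n) × (Fin n → Bool) × (Fin n → Fin 3),
          C0 * (B.card : ℝ) ^ (1 - β) := Finset.sum_le_sum fun w _ => hfiber w
    _ = (Fintype.card (Finset (Fin n) × (Fin n → Bool) × (Fin n → Fin 3)) : ℝ) *
          (C0 * (B.card : ℝ) ^ (1 - β)) := by
        rw [Finset.sum_const, Finset.card_univ, nsmul_eq_mul]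
    _ ≤ (12 : ℝ) ^ n * C0 * (B.card : ℝ) ^ (1 - β) := by
        rw [mul_assoc]
        exact mul_le_mul_of_nonneg_right hcard12 (by positivity)

set_option maxHeartbeats 1000000 in
/-- strong `L^p → L^q(Q₀)` bound for the linearized operator, `q > q*·p`.
If the face selection has the overlap property with constant `C₀ = C₀(n,k)`, then there is
`C' = C'(k,n,p,q) > 0` such that for every `f ∈ L^p(ℝⁿ)`,
`‖M̃^k_{ρ,δ} f‖_{L^q(Q₀)} ≤ C δ^{n/q + (k-n)/p} ‖f‖_{L^p}`. -/
theorem linMax_strong_bound_high (n k : ℕ) (hn : 2 ≤ n) (hk : k < n)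
    (p q : ℝ) (hp : 1 < p) (hpq : p ≤ q)
    (hq : 2 * (n : ℝ) ^ 2 / (((n : ℝ) - k) * (2 * (n : ℝ) - 1)) * p < q)
    (C0 : ℝ) (hC0 : 0 < C0) :
    ∃ C > 0, ∀ δ ∈ Set.Ioo (0 : ℝ) 1, ∀ (m : ℕ) (hm : 0 < m), δ * m = 1 →
      ∀ (ρ : (Fin n → Fin m) → ℝ),
        (∀ z, ρ z ∈ Set.Icc (1 : ℝ) 2 ∧ ∃ t : ℤ, ρ z = δ * t) →
      ∀ (S : (Fin n → Fin m) → Finset (Fin n)), (∀ z, (S z).card = n - k) →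
      ∀ (ε : (Fin n → Fin m) → Fin n → Bool), OverlapProp k δ ρ S ε C0 →
      ∀ f : (Fin n → ℝ) → ℝ, MemLp f (ENNReal.ofReal p) volume →
        eLpNorm (linMax δ hm ρ S ε f) (ENNReal.ofReal q) (volume.restrict (Q0 n)) ≤
          ENNReal.ofReal (C * δ ^ ((n : ℝ) / q + ((k : ℝ) - n) / p)) *
            eLpNorm f (ENNReal.ofReal p) volume := by
  classical
  have hn1 : (1 : ℝ) ≤ (n : ℝ) := by exact_mod_cast (by omega : 1 ≤ n)
  have hkR : (k : ℝ) < (n : ℝ) := by exact_mod_cast hk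
  have hp0 : (0 : ℝ) < p := lt_trans one_pos hp
  have hq0 : (0 : ℝ) < q := lt_of_lt_of_le hp0 hpq
  set β : ℝ := ((n : ℝ) - k) * (2 * (n : ℝ) - 1) / (2 * (n : ℝ) ^ 2) with hβdef
  have hd : (0 : ℝ) < ((n : ℝ) - k) * (2 * (n : ℝ) - 1) := by nlinarith
  have hβpos : 0 < β := by
    rw [hβdef]
    positivity
  have hβ1 : β ≤ 1 := by
    rw [hβdef, div_le_one (by positivity)]
    nlinarith
  have hs1 : 1 < q / p * β := by
    have h2 := hq
    rw [div_mul_eq_mul_div, div_lt_iff₀ hd] at h2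
    rw [hβdef, div_mul_div_comm, lt_div_iff₀ (by positivity)]
    nlinarith
  have hsum : Summable (fun j : ℕ => ((j : ℝ) + 1) ^ (-(q / p * β))) := aux_summable hs1
  set K : ℝ := ∑' j : ℕ, ((j : ℝ) + 1) ^ (-(q / p * β)) with hKdef
  have hKnn : 0 ≤ K := tsum_nonneg fun i => by positivity
  have hKbound : ∀ M : ℕ, ∑ j ∈ Finset.range M, ((j : ℝ) + 1) ^ (-(q / p * β)) ≤ K :=
    fun M => hsum.sum_le_tsum _ (fun i _ => by positivity)
  set Cm : ℝ := (12 : ℝ) ^ n * C0 with hCmdef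
  have hCmpos : 0 < Cm := by positivity
  set K1 : ℝ := K * (Cm * ((2 : ℝ) ^ n)⁻¹) ^ (q / p) with hK1def
  have hK1nn : 0 ≤ K1 := by positivity
  refine ⟨max 1 (K1 ^ (1 / q)), lt_of_lt_of_le one_pos (le_max_left _ _), ?_⟩
  intro δ hδIoo m hm hδm ρ hρ S hS ε hov f hf
  obtain ⟨hδ0, hδ1⟩ := hδIoo
  set C : ℝ := max 1 (K1 ^ (1 / q)) with hCdef
  have hC1 : (1 : ℝ) ≤ C := le_max_left _ _
  have hCpos : (0 : ℝ) < C := lt_of_lt_of_le one_pos hC1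
  have hCq : K1 ≤ C ^ q := by
    have h1 : K1 ^ (1 / q) ≤ C := le_max_right _ _
    have h2 := Real.rpow_le_rpow (Real.rpow_nonneg hK1nn _) h1 hq0.le
    rwa [← Real.rpow_mul hK1nn, one_div, inv_mul_cancel₀ hq0.ne', Real.rpow_one] at h2
  -- basic exponents
  have hP0ne : ENNReal.ofReal p ≠ 0 := by
    simp only [ne_eq, ENNReal.ofReal_eq_zero, not_le]
    exact hp0
  have hPtop : ENNReal.ofReal p ≠ ⊤ := ENNReal.ofReal_ne_top
  have hQ0ne : ENNReal.ofReal q ≠ 0 := by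
    simp only [ne_eq, ENNReal.ofReal_eq_zero, not_le]
    exact hq0
  have hQtop : ENNReal.ofReal q ≠ ⊤ := ENNReal.ofReal_ne_top
  have hPtoReal : (ENNReal.ofReal p).toReal = p := ENNReal.toReal_ofReal hp0.le
  have hQtoReal : (ENNReal.ofReal q).toReal = q := ENNReal.toReal_ofReal hq0.le
  -- the L^p mass of f
  have hfin := hf.2
  rw [eLpNorm_eq_lintegral_rpow_enorm_toReal hP0ne hPtop, hPtoReal] at hfin
  simp only [enorm_eq_nnnorm] at hfin
  set Ip : ENNReal := ∫⁻ y, (‖f y‖₊ : ENNReal) ^ p with hIpdef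
  have hIpt : Ip ≠ ⊤ := by
    intro hcon
    rw [hcon, ENNReal.top_rpow_of_pos (by positivity)] at hfin
    exact lt_irrefl _ hfin
  set Nr : ℝ := (eLpNorm f (ENNReal.ofReal p) volume).toReal with hNrdef
  have hNr0 : 0 ≤ Nr := ENNReal.toReal_nonneg
  set T : ℝ := Ip.toReal with hTdef
  have hT0 : 0 ≤ T := ENNReal.toReal_nonneg
  have hTNr : T ^ (q / p) = Nr ^ q := by
    have h1 : Nr = T ^ (1 / p) := by
      rw [hNrdef, eLpNorm_eq_lintegral_rpow_enorm_toReal hP0ne hPtop, hPtoReal, hTdef,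
        ENNReal.toReal_rpow]
      rfl
    rw [h1, ← Real.rpow_mul hT0]
    congr 1
    field_simp
  -- per-cube averages
  have hρ1 : ∀ z, 1 ≤ ρ z := fun z => (hρ z).1.1
  have hkn : k ≤ n := hk.le
  set a : (Fin n → Fin m) → ℝ :=
    fun z => ⨍ y in cthickening δ (linFace δ ρ S ε z), |f y| with hadef
  have hVlow : ∀ z, ENNReal.ofReal ((2 * δ) ^ (n - k) * 2 ^ k) ≤
      volume (cthickening δ (linFace δ ρ S ε z)) := fun z =>
    volume_lower hkn hδ0.le (hρ1 z) (hS z) (ε z)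
  have hw0pos : (0 : ℝ) < (2 * δ) ^ (n - k) * 2 ^ k := by positivity
  have hV0 : ∀ z, volume (cthickening δ (linFace δ ρ S ε z)) ≠ 0 := by
    intro z hcon
    have := hVlow z
    rw [hcon, le_zero_iff, ENNReal.ofReal_eq_zero] at this
    linarith
  have hVt : ∀ z, volume (cthickening δ (linFace δ ρ S ε z)) ≠ ⊤ := fun z =>
    volume_upper_ne_top (le_trans zero_le_one (hρ1 z))
  have ha0 : ∀ z, 0 ≤ a z := by
    intro z
    simp only [hadef]
    rw [setAverage_eq, smul_eq_mul]
    have h1 : 0 ≤ ∫ y in cthickening δ (linFace δ ρ S ε z), |f y| :=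
      integral_nonneg fun y => abs_nonneg _
    positivity
  set L : (Fin n → Fin m) → ENNReal :=
    fun z => ∫⁻ y in cthickening δ (linFace δ ρ S ε z), (‖f y‖₊ : ENNReal) ^ p with hLdef
  have hLt : ∀ z, L z ≠ ⊤ := by
    intro z
    have h1 : L z ≤ Ip := setLIntegral_le_lintegral _ _
    exact fun hcon => hIpt (top_le_iff.1 (hcon ▸ h1))
  have hJen : ∀ z, a z ^ p ≤ ((2 * δ) ^ (n - k) * 2 ^ k)⁻¹ * (L z).toReal := by
    intro z
    have h1 := avg_pow_le (A := cthickening δ (linFace δ ρ S ε z))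
      isClosed_cthickening.measurableSet (hV0 z) (hVt z) hf.1 hp
    have h2 : (volume (cthickening δ (linFace δ ρ S ε z)))⁻¹ ≤
        ENNReal.ofReal (((2 * δ) ^ (n - k) * 2 ^ k)⁻¹) := by
      rw [ENNReal.ofReal_inv_of_pos hw0pos]
      exact ENNReal.inv_le_inv' (hVlow z)
    have h3 : ENNReal.ofReal (a z) ^ p ≤
        ENNReal.ofReal (((2 * δ) ^ (n - k) * 2 ^ k)⁻¹) * L z :=
      h1.trans (mul_le_mul_left h2 _)
    have h4 : (ENNReal.ofReal (a z) ^ p).toReal = a z ^ p := by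
      rw [ENNReal.ofReal_rpow_of_nonneg (ha0 z) hp0.le,
        ENNReal.toReal_ofReal (Real.rpow_nonneg (ha0 z) p)]
    have h5 : ENNReal.ofReal (((2 * δ) ^ (n - k) * 2 ^ k)⁻¹) * L z ≠ ⊤ :=
      ENNReal.mul_ne_top ENNReal.ofReal_ne_top (hLt z)
    have h6 := ENNReal.toReal_mono h5 h3
    rw [h4, ENNReal.toReal_mul, ENNReal.toReal_ofReal (by positivity)] at h6
    exact h6
  -- energy estimate via the overlap property
  set g : (Fin n → Fin m) → ℝ := fun z => ((2 * δ) ^ (n - k) * 2 ^ k)⁻¹ * (L z).toReal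
    with hgdef
  have hg0 : ∀ z, 0 ≤ g z := fun z => by
    simp only [hgdef]
    positivity
  set D : ℝ := ((2 * δ) ^ (n - k) * 2 ^ k)⁻¹ * (Cm * T) with hDdef
  have hD0 : 0 ≤ D := by positivity
  have hH : ∀ B : Finset (Fin n → Fin m), ∑ z ∈ B, g z ≤ D * (B.card : ℝ) ^ (1 - β) := by
    intro B
    have hmeasA : ∀ z : Fin n → Fin m,
        MeasurableSet (cthickening δ (linFace δ ρ S ε z)) := fun z =>
      isClosed_cthickening.measurableSet
    have hFm : AEMeasurable (fun y => ((‖f y‖₊ : ENNReal)) ^ p) volume :=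
      hf.1.enorm.pow_const p
    have hEN : ∑ z ∈ B, L z ≤ ENNReal.ofReal (Cm * (B.card : ℝ) ^ (1 - β)) * Ip := by
      calc ∑ z ∈ B, L z
          = ∫⁻ y, ∑ z ∈ B, (cthickening δ (linFace δ ρ S ε z)).indicator
              (fun y => ((‖f y‖₊ : ENNReal)) ^ p) y := by
            rw [lintegral_finset_sum' B (fun z _ => hFm.indicator (hmeasA z))]
            exact Finset.sum_congr rfl fun z _ =>
              (lintegral_indicator (hmeasA z) _).symm
        _ ≤ ∫⁻ y, ENNReal.ofReal (Cm * (B.card : ℝ) ^ (1 - β)) * ((‖f y‖₊ : ENNReal)) ^ p := by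
            apply lintegral_mono
            intro y
            have hmul := multiplicity_bound hk hδ0 hρ hS hC0 hov B y
            calc ∑ z ∈ B, (cthickening δ (linFace δ ρ S ε z)).indicator
                  (fun y => ((‖f y‖₊ : ENNReal)) ^ p) y
                = ∑ z ∈ B.filter (fun z => y ∈ cthickening δ (linFace δ ρ S ε z)),
                    ((‖f y‖₊ : ENNReal)) ^ p := by
                  rw [Finset.sum_filter]
                  exact Finset.sum_congr rfl fun z _ => Set.indicator_apply _ _ _
              _ = ((B.filter (fun z => y ∈ cthickening δ (linFace δ ρ S ε z))).card : ENNReal) *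
                    ((‖f y‖₊ : ENNReal)) ^ p := by
                  rw [Finset.sum_const, nsmul_eq_mul]
              _ ≤ ENNReal.ofReal (Cm * (B.card : ℝ) ^ (1 - β)) * ((‖f y‖₊ : ENNReal)) ^ p := by
                  apply mul_le_mul_left
                  rw [← ENNReal.ofReal_natCast]
                  apply ENNReal.ofReal_le_ofReal
                  rw [hCmdef]
                  calc ((B.filter (fun z =>
                        y ∈ cthickening δ (linFace δ ρ S ε z))).card : ℝ)
                      ≤ (12 : ℝ) ^ n * C0 * (B.card : ℝ) ^
                          (1 - ((n : ℝ) - k) * (2 * (n : ℝ) - 1) / (2 * (n : ℝ) ^ 2)) := hmul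
                    _ = (12 : ℝ) ^ n * C0 * (B.card : ℝ) ^ (1 - β) := by rw [← hβdef]
        _ = ENNReal.ofReal (Cm * (B.card : ℝ) ^ (1 - β)) * Ip :=
            lintegral_const_mul' _ _ ENNReal.ofReal_ne_top
    have h7 := ENNReal.toReal_mono (ENNReal.mul_ne_top ENNReal.ofReal_ne_top hIpt) hEN
    rw [ENNReal.toReal_sum (fun z _ => hLt z), ENNReal.toReal_mul,
      ENNReal.toReal_ofReal (mul_nonneg hCmpos.le (Real.rpow_nonneg (Nat.cast_nonneg _) _)),
      ← hTdef] at h7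
    calc ∑ z ∈ B, g z = ((2 * δ) ^ (n - k) * 2 ^ k)⁻¹ * ∑ z ∈ B, (L z).toReal := by
          rw [Finset.mul_sum]
      _ ≤ ((2 * δ) ^ (n - k) * 2 ^ k)⁻¹ * (Cm * (B.card : ℝ) ^ (1 - β) * T) :=
          mul_le_mul_of_nonneg_left h7 (by positivity)
      _ = D * (B.card : ℝ) ^ (1 - β) := by
          rw [hDdef]
          ring
  have hEnergy := aux_energy (q / p) β D K (by positivity) hD0 hKbound g hg0 hH Finset.univ
  have haq : ∀ z, a z ^ q ≤ g z ^ (q / p) := by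
    intro z
    have h1 : a z ^ q = (a z ^ p) ^ (q / p) := by
      rw [← Real.rpow_mul (ha0 z)]
      congr 1
      field_simp
    rw [h1]
    exact Real.rpow_le_rpow (Real.rpow_nonneg (ha0 z) p) (hJen z) (by positivity)
  have hsum_aq : ∑ z : Fin n → Fin m, a z ^ q ≤ D ^ (q / p) * K :=
    le_trans (Finset.sum_le_sum fun z _ => haq z) hEnergy
  -- compute the L^q norm of the linearized operator
  have hlin : ∀ z : Fin n → Fin m, ∀ x ∈ gridCube δ z, linMax δ hm ρ S ε f x = a z := by
    intro z x hx
    simp only [linMax, hadef]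
    rw [zOf_eq hδ0 hm hx]
  have hLHS : ∫⁻ x in Q0 n, ((‖linMax δ hm ρ S ε f x‖₊ : ENNReal)) ^ q =
      ENNReal.ofReal (∑ z : Fin n → Fin m, a z ^ q * δ ^ n) := by
    rw [Q0_eq_iUnion hδ0 hm hδm,
      lintegral_iUnion (fun z => gridCube_meas δ z) (gridCube_disj hδ0), tsum_fintype,
      ENNReal.ofReal_sum_of_nonneg (fun z _ => mul_nonneg (Real.rpow_nonneg (ha0 z) q) (by positivity))]
    refine Finset.sum_congr rfl fun z _ => ?_
    have hconst : ∫⁻ x in gridCube δ z, ((‖linMax δ hm ρ S ε f x‖₊ : ENNReal)) ^ q =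
        ∫⁻ _x in gridCube δ z, ENNReal.ofReal (a z ^ q) := by
      apply setLIntegral_congr_fun (gridCube_meas δ z)
      intro x hx
      beta_reduce
      rw [hlin z x hx, ← enorm_eq_nnnorm, Real.enorm_eq_ofReal_abs, abs_of_nonneg (ha0 z),
        ENNReal.ofReal_rpow_of_nonneg (ha0 z) hq0.le]
    rw [hconst, setLIntegral_const, gridCube_vol hδ0 z,
      ← ENNReal.ofReal_mul (Real.rpow_nonneg (ha0 z) q)]
  -- final computation
  have hreal : ∑ z : Fin n → Fin m, a z ^ q * δ ^ n ≤
      (C * δ ^ ((n : ℝ) / q + ((k : ℝ) - n) / p) * Nr) ^ q := by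
    calc ∑ z : Fin n → Fin m, a z ^ q * δ ^ n
        = (∑ z : Fin n → Fin m, a z ^ q) * δ ^ n := by rw [← Finset.sum_mul]
      _ ≤ (D ^ (q / p) * K) * δ ^ n :=
          mul_le_mul_of_nonneg_right hsum_aq (by positivity)
      _ ≤ (C * δ ^ ((n : ℝ) / q + ((k : ℝ) - n) / p) * Nr) ^ q := by
          rw [hDdef]
          exact aux_const_calc hk hδ0 hp0 hq0 hKnn hCmpos.le hNr0 hT0 hTNr hCpos.le hCq
  -- wrap up
  have hRHS : eLpNorm f (ENNReal.ofReal p) volume = ENNReal.ofReal Nr := by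
    rw [hNrdef, ENNReal.ofReal_toReal hf.2.ne]
  rw [eLpNorm_eq_lintegral_rpow_enorm_toReal hQ0ne hQtop, hQtoReal]
  simp only [enorm_eq_nnnorm]
  rw [hLHS, hRHS,
    ← ENNReal.ofReal_mul (by positivity)]
  calc ENNReal.ofReal (∑ z : Fin n → Fin m, a z ^ q * δ ^ n) ^ (1 / q)
      ≤ ENNReal.ofReal ((C * δ ^ ((n : ℝ) / q + ((k : ℝ) - n) / p) * Nr) ^ q) ^ (1 / q) :=
        ENNReal.rpow_le_rpow (ENNReal.ofReal_le_ofReal hreal) (by positivity)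
    _ = ENNReal.ofReal (C * δ ^ ((n : ℝ) / q + ((k : ℝ) - n) / p) * Nr) := by
        rw [← ENNReal.ofReal_rpow_of_nonneg (by positivity) hq0.le,
          ← ENNReal.rpow_mul, mul_one_div, div_self hq0.ne', ENNReal.rpow_one]
    _ = ENNReal.ofReal (C * δ ^ ((n : ℝ) / q + ((k : ℝ) - n) / p) * Nr) := rfl
end
end

section
/- Let n ≥ 2 and 0 ≤ k < n be integers, 1 ≤ p, q < ∞, and δ ∈ (0,1). Then for every real N > 6 there exists a nonzero f ∈ L^p(ℝ^n) (namely the indicator of an axis-parallel cube of side length N) such that ‖M^k_δ f‖_{L^q(ℝ^n)} ≥ (N−6)^{n/q} · N^{−n/p} · ‖f‖_{L^p(ℝ^n)}. In particular, ‖M^k_δ‖_{L^p→L^q} ≥ (N−6)^{n/q} N^{−n/p} for all N > 6. -/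
open MeasureTheory Metric Set

noncomputable section

section Helpers

variable {n : ℕ}

/-- Any `k`-face is contained in the `ℓ∞` closed ball of radius `r`. -/
lemma kFace_subset_closedBall {x : Fin n → ℝ} {r : ℝ} (hr : 0 ≤ r)
    (S : Finset (Fin n)) (ε : Fin n → Bool) :
    kFace x r S ε ⊆ closedBall x r := by
  intro z hz
  rw [mem_closedBall, dist_pi_le_iff hr]
  intro j
  rw [Real.dist_eq]
  by_cases hj : j ∈ S
  · rw [hz.1 j hj]
    have : x j + (if ε j then r else -r) - x j = (if ε j then r else -r) := by ring
    rw [this]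
    rcases ε j with _ | _ <;> simp [abs_of_nonneg hr, abs_neg]
  · exact hz.2 j hj

/-- Any `k`-face is nonempty (for `r ≥ 0`). -/
lemma kFace_nonempty {x : Fin n → ℝ} {r : ℝ} (hr : 0 ≤ r)
    (S : Finset (Fin n)) (ε : Fin n → Bool) :
    (kFace x r S ε).Nonempty := by
  refine ⟨fun j => if j ∈ S then x j + (if ε j then r else -r) else x j, ?_, ?_⟩
  · intro j hj; simp [hj]
  · intro j hj; simp [hj, hr]

lemma cthickening_kFace_subset {x : Fin n → ℝ} {r δ : ℝ} (hr : 0 ≤ r) (hδ : 0 ≤ δ)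
    (S : Finset (Fin n)) (ε : Fin n → Bool) :
    cthickening δ (kFace x r S ε) ⊆ closedBall x (δ + r) := by
  calc cthickening δ (kFace x r S ε)
      ⊆ cthickening δ (closedBall x r) :=
        cthickening_subset_of_subset δ (kFace_subset_closedBall hr S ε)
    _ = closedBall x (δ + r) := cthickening_closedBall hδ hr x

lemma volume_cthickening_kFace_pos {x : Fin n → ℝ} {r δ : ℝ} (hr : 0 ≤ r) (hδ : 0 < δ)
    (S : Finset (Fin n)) (ε : Fin n → Bool) :
    0 < volume (cthickening δ (kFace x r S ε)) := by
  obtain ⟨y₀, hy₀⟩ := kFace_nonempty hr S ε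
  have h1 : closedBall y₀ δ ⊆ cthickening δ (kFace x r S ε) :=
    closedBall_subset_cthickening hy₀ δ
  exact lt_of_lt_of_le (measure_closedBall_pos volume y₀ hδ) (measure_mono h1)

lemma volume_cthickening_kFace_lt_top {x : Fin n → ℝ} {r δ : ℝ} (hr : 0 ≤ r) (hδ : 0 ≤ δ)
    (S : Finset (Fin n)) (ε : Fin n → Bool) :
    volume (cthickening δ (kFace x r S ε)) < ⊤ :=
  lt_of_le_of_lt (measure_mono (cthickening_kFace_subset hr hδ S ε))
    measure_closedBall_lt_top

end Helpers

/-- for every `N > 6` the indicator of an axis-parallel cube of side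
length `N` is a nonzero `f ∈ L^p` witnessing
`‖M^k_δ f‖_{L^q} ≥ (N-6)^{n/q} N^{-n/p} ‖f‖_{L^p}`; in particular
`‖M^k_δ‖_{L^p → L^q} ≥ (N-6)^{n/q} N^{-n/p}`. -/

theorem skelMax_norm_lower_bound_cube (n k : ℕ) (hn : 2 ≤ n) (hk : k < n)
    (p q : ℝ) (hp : 1 ≤ p) (hq : 1 ≤ q) (δ : ℝ) (hδ : δ ∈ Set.Ioo (0 : ℝ) 1) :
    ∀ N : ℝ, 6 < N → ∃ (c : Fin n → ℝ) (f : (Fin n → ℝ) → ℝ),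
      f = (Set.univ.pi fun j => Set.Icc (c j - N / 2) (c j + N / 2)).indicator
        (fun _ => (1 : ℝ)) ∧
      MemLp f (ENNReal.ofReal p) volume ∧
      eLpNorm f (ENNReal.ofReal p) volume ≠ 0 ∧
      ENNReal.ofReal ((N - 6) ^ ((n : ℝ) / q) * N ^ (-(n : ℝ) / p)) *
          eLpNorm f (ENNReal.ofReal p) volume ≤
        eLpNorm (skelMax n k δ f) (ENNReal.ofReal q) volume := by
  intro N hN
  have hN0 : (0:ℝ) < N := by linarith
  have hN6 : (0:ℝ) < N - 6 := by linarith
  set Q : Set (Fin n → ℝ) :=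
    Set.univ.pi fun j => Set.Icc ((0:ℝ) - N / 2) ((0:ℝ) + N / 2) with hQ
  set f : (Fin n → ℝ) → ℝ := Q.indicator (fun _ => (1 : ℝ)) with hf
  have hQmeas : MeasurableSet Q := MeasurableSet.univ_pi fun j => measurableSet_Icc
  have hvolQ : volume Q = ENNReal.ofReal N ^ n := by
    rw [hQ, volume_pi_pi]
    have : ((0:ℝ) + N / 2) - ((0:ℝ) - N / 2) = N := by ring
    simp [Real.volume_Icc, this]
  have hvolQ_ne_top : volume Q ≠ ⊤ := by
    rw [hvolQ]; exact ENNReal.pow_ne_top ENNReal.ofReal_ne_top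
  have hp0 : (0:ℝ) < p := by linarith
  have hq0 : (0:ℝ) < q := by linarith
  have hpne : ENNReal.ofReal p ≠ 0 := by
    simp only [ne_eq, ENNReal.ofReal_eq_zero, not_le]; linarith
  have hqne : ENNReal.ofReal q ≠ 0 := by
    simp only [ne_eq, ENNReal.ofReal_eq_zero, not_le]; linarith
  have hfnorm : eLpNorm f (ENNReal.ofReal p) volume
      = (ENNReal.ofReal N ^ n) ^ (1 / p) := by
    rw [hf, eLpNorm_indicator_const hQmeas hpne ENNReal.ofReal_ne_top, hvolQ,
      ENNReal.toReal_ofReal hp0.le]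
    simp
  have haN0 : ENNReal.ofReal N ≠ 0 := by
    simp only [ne_eq, ENNReal.ofReal_eq_zero, not_le]; linarith
  have hmem : MemLp f (ENNReal.ofReal p) volume :=
    memLp_indicator_const (ENNReal.ofReal p) hQmeas 1 (Or.inr hvolQ_ne_top)
  have hfne : eLpNorm f (ENNReal.ofReal p) volume ≠ 0 := by
    rw [hfnorm]
    exact (ENNReal.rpow_pos (pos_iff_ne_zero.2 (pow_ne_zero n haN0))
      (ENNReal.pow_ne_top ENNReal.ofReal_ne_top)).ne'
  -- the small cube where `skelMax f ≥ 1`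
  set Qs : Set (Fin n → ℝ) :=
    Set.univ.pi fun j => Set.Icc (-((N - 6) / 2)) ((N - 6) / 2) with hQs
  have hQsmeas : MeasurableSet Qs := MeasurableSet.univ_pi fun j => measurableSet_Icc
  -- key subset property
  have hsub : ∀ x : Fin n → ℝ, x ∈ Qs → ∀ r ∈ Set.Icc (1:ℝ) 2,
      ∀ (S : Finset (Fin n)) (ε : Fin n → Bool),
      cthickening δ (kFace x r S ε) ⊆ Q := by
    intro x hx r hr S ε y hy
    have hr0 : (0:ℝ) ≤ r := le_trans zero_le_one hr.1
    have hy' : y ∈ closedBall x (δ + r) := cthickening_kFace_subset hr0 hδ.1.le S ε hy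
    rw [mem_closedBall] at hy'
    rw [hQ, Set.mem_pi]
    intro j _
    have h1 : dist (y j) (x j) ≤ δ + r := le_trans (dist_le_pi_dist y x j) hy'
    rw [Real.dist_eq] at h1
    have h2 : |y j - x j| ≤ 3 := by
      refine le_trans h1 ?_
      have := hδ.2
      have := hr.2
      linarith
    have hxj : x j ∈ Set.Icc (-((N - 6) / 2)) ((N - 6) / 2) := by
      rw [hQs, Set.mem_pi] at hx; exact hx j (Set.mem_univ j)
    obtain ⟨hxl, hxr⟩ := hxj
    rw [abs_le] at h2
    constructor <;> [linarith [h2.1]; linarith [h2.2]]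
  -- `skelMax f x ≥ 1` on `Qs`
  have hskel : ∀ x ∈ Qs, (1:ℝ) ≤ skelMax n k δ f x := by
    intro x hx
    haveI : Nonempty {S : Finset (Fin n) // S.card = n - k} := by
      obtain ⟨S, -, hS⟩ := Finset.exists_subset_card_eq
        (show n - k ≤ (Finset.univ : Finset (Fin n)).card by simp [Nat.sub_le])
      exact ⟨⟨S, hS⟩⟩
    have havg : ∀ r ∈ Set.Icc (1:ℝ) 2, ∀ (S : Finset (Fin n)) (ε : Fin n → Bool),
        ⨍ y in cthickening δ (kFace x r S ε), |f y| = 1 := by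
      intro r hr S ε
      have hr0 : (0:ℝ) ≤ r := le_trans zero_le_one hr.1
      set t := cthickening δ (kFace x r S ε) with ht
      have htQ : t ⊆ Q := hsub x hx r hr S ε
      have htmeas : MeasurableSet t := isClosed_cthickening.measurableSet
      have ht0 : volume t ≠ 0 :=
        (volume_cthickening_kFace_pos hr0 hδ.1 S ε).ne'
      have httop : volume t ≠ ⊤ :=
        (volume_cthickening_kFace_lt_top hr0 hδ.1.le S ε).ne
      have hcongr : (fun y => |f y|) =ᵐ[volume.restrict t] fun _ => (1:ℝ) := by
        refine (ae_restrict_iff' htmeas).2 (Filter.Eventually.of_forall ?_)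
        intro y hy
        show |f y| = 1
        have : f y = 1 := by rw [hf]; exact Set.indicator_of_mem (htQ hy) _
        rw [this, abs_one]
      rw [average_congr hcongr, setAverage_const ht0 httop]
    have h1mem : (1:ℝ) ∈ Set.Icc (1:ℝ) 2 := ⟨le_refl 1, by norm_num⟩
    have hF : ∀ r ∈ Set.Icc (1:ℝ) 2,
        (⨅ (S : {S : Finset (Fin n) // S.card = n - k}) (ε : Fin n → Bool),
          ⨍ y in cthickening δ (kFace x r S.1 ε), |f y|) = 1 := by
      intro r hr
      have h1 : ∀ S : {S : Finset (Fin n) // S.card = n - k},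
          (⨅ ε : Fin n → Bool, ⨍ y in cthickening δ (kFace x r S.1 ε), |f y|) = 1 := by
        intro S
        rw [show (fun ε : Fin n → Bool =>
            ⨍ y in cthickening δ (kFace x r S.1 ε), |f y|) = fun _ => 1 from
          funext fun ε => havg r hr S.1 ε]
        exact ciInf_const
      rw [show (fun S : {S : Finset (Fin n) // S.card = n - k} =>
          ⨅ ε : Fin n → Bool, ⨍ y in cthickening δ (kFace x r S.1 ε), |f y|)
          = fun _ => 1 from funext h1]
      exact ciInf_const
    have hbdd : BddAbove (Set.range fun r : ℝ =>
        ⨆ _ : r ∈ Set.Icc (1:ℝ) 2,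
          ⨅ (S : {S : Finset (Fin n) // S.card = n - k}) (ε : Fin n → Bool),
            ⨍ y in cthickening δ (kFace x r S.1 ε), |f y|) := by
      refine ⟨1, ?_⟩
      rintro _ ⟨r, rfl⟩
      beta_reduce
      by_cases hr : r ∈ Set.Icc (1:ℝ) 2
      · rw [ciSup_pos hr, hF r hr]
      · haveI : IsEmpty (r ∈ Set.Icc (1:ℝ) 2) := ⟨hr⟩
        rw [iSup_of_empty', Real.sSup_empty]
        norm_num
    calc (1:ℝ) = ⨆ _ : (1:ℝ) ∈ Set.Icc (1:ℝ) 2,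
          ⨅ (S : {S : Finset (Fin n) // S.card = n - k}) (ε : Fin n → Bool),
            ⨍ y in cthickening δ (kFace x (1:ℝ) S.1 ε), |f y| := by
          rw [ciSup_pos h1mem, hF 1 h1mem]
      _ ≤ skelMax n k δ f x := le_ciSup hbdd (1:ℝ)
  -- comparison of eLpNorms
  have hmono : eLpNorm (Qs.indicator fun _ => (1:ℝ)) (ENNReal.ofReal q) volume
      ≤ eLpNorm (skelMax n k δ f) (ENNReal.ofReal q) volume := by
    apply eLpNorm_mono
    intro x
    by_cases hx : x ∈ Qs
    · rw [Set.indicator_of_mem hx, Real.norm_eq_abs, Real.norm_eq_abs, abs_one]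
      exact le_trans (hskel x hx) (le_abs_self _)
    · rw [Set.indicator_of_notMem hx, norm_zero]
      exact norm_nonneg _
  have hvolQs : volume Qs = ENNReal.ofReal (N - 6) ^ n := by
    rw [hQs, volume_pi_pi]
    have : ((N - 6) / 2) - (-((N - 6) / 2)) = N - 6 := by ring
    simp [Real.volume_Icc, this]
  have hsmall : eLpNorm (Qs.indicator fun _ => (1:ℝ)) (ENNReal.ofReal q) volume
      = (ENNReal.ofReal (N - 6) ^ n) ^ (1 / q) := by
    rw [eLpNorm_indicator_const hQsmeas hqne ENNReal.ofReal_ne_top, hvolQs,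
      ENNReal.toReal_ofReal hq0.le]
    simp
  have hfinal : ENNReal.ofReal ((N - 6) ^ ((n : ℝ) / q) * N ^ (-(n : ℝ) / p)) *
      eLpNorm f (ENNReal.ofReal p) volume ≤
      eLpNorm (skelMax n k δ f) (ENNReal.ofReal q) volume := by
    refine le_trans (le_of_eq ?_) (hsmall ▸ hmono)
    rw [hfnorm]
    rw [ENNReal.ofReal_mul (by positivity),
      ← ENNReal.ofReal_rpow_of_pos hN6, ← ENNReal.ofReal_rpow_of_pos hN0,
      ← ENNReal.rpow_natCast (ENNReal.ofReal N) n,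
      ← ENNReal.rpow_natCast (ENNReal.ofReal (N - 6)) n,
      ← ENNReal.rpow_mul, ← ENNReal.rpow_mul, mul_assoc,
      ← ENNReal.rpow_add _ _ haN0 ENNReal.ofReal_ne_top]
    have he1 : -(n:ℝ) / p + (n:ℝ) * (1 / p) = 0 := by field_simp; ring
    have he2 : (n:ℝ) * (1 / q) = (n:ℝ) / q := by ring
    rw [he1, he2, ENNReal.rpow_zero, mul_one]
  exact ⟨fun _ => 0, f, rfl, hmem, hfne, hfinal⟩
end
end
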